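/- Let G be a graph, A ∈ S(G), B ∈ S(complement of G) with AB = O, and let i ≠ j be vertices such that N_G(i) \ N_G[j] = {v} for some vertex v. If i is adjacent to j in G, then b_jj ≠ 0 and a_jj = 0; if i is not adjacent to j in G, then a_ii ≠ 0 and b_ii = 0. -/
import Mathlib


/-- `A ∈ S(G)`: real symmetric matrix whose off-diagonal nonzero pattern is `E(G)`. -/
def MatIn {V : Type*} [Fintype V] (G : SimpleGraph V) (A : Matrix V V ℝ) : Prop :=
  A.IsSymm ∧ ∀ i j : V, i ≠ j → (A i j ≠ 0 ↔ G.Adj i j)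

/-- `G` is complementary vanishing. -/
def CompVan {V : Type*} [Fintype V] (G : SimpleGraph V) : Prop :=
  ∃ A B : Matrix V V ℝ, MatIn G A ∧ MatIn Gᶜ B ∧ A * B = 0

theorem stmt_3 {n : ℕ} (G : SimpleGraph (Fin n)) (A B : Matrix (Fin n) (Fin n) ℝ)
    (hA : MatIn G A) (hB : MatIn Gᶜ B) (hAB : A * B = 0) (i j v : Fin n) (hij : i ≠ j)
    (hdiff : G.neighborSet i \ insert j (G.neighborSet j) = {v}) :
    (G.Adj i j → B j j ≠ 0 ∧ A j j = 0) ∧ (¬G.Adj i j → A i i ≠ 0 ∧ B i i = 0) := by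
  obtain ⟨hAsymm, hAadj⟩ := hA
  obtain ⟨hBsymm, hBadj⟩ := hB
  have hv : v ∈ G.neighborSet i \ insert j (G.neighborSet j) := by rw [hdiff]; exact rfl
  obtain ⟨hvi, hvj⟩ := hv
  have hvnej : v ≠ j := fun h => hvj (by simp [h])
  have hvadjj : ¬ G.Adj j v := fun h => hvj (Set.mem_insert_of_mem _ h)
  have hvnei : v ≠ i := fun h => G.irrefl (h ▸ hvi)
  have hAiv : A i v ≠ 0 := (hAadj i v (Ne.symm hvnei)).mpr hvi
  have hBvj : B v j ≠ 0 := (hBadj v j hvnej).mpr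
    ((SimpleGraph.compl_adj _ _ _).mpr ⟨hvnej, fun h => hvadjj h.symm⟩)
  have hdiag : ∀ x, A x x * B x x = 0 := by
    intro x
    have h0 : ∑ k, A x k * B k x = 0 := by
      have := congrFun (congrFun hAB x) x
      simpa [Matrix.mul_apply] using this
    rw [← h0]
    symm
    apply Finset.sum_eq_single x
    · intro k _ hk
      by_cases hA0 : A x k = 0
      · rw [hA0, zero_mul]
      · have hadj : G.Adj x k := (hAadj x k (Ne.symm hk)).mp hA0
        have hB0 : B k x = 0 := by
          by_contra hB0
          exact ((SimpleGraph.compl_adj _ _ _).mp ((hBadj k x hk).mp hB0)).2 hadj.symm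
        rw [hB0, mul_zero]
    · intro h; exact absurd (Finset.mem_univ x) h
  have key : ∀ k, k ≠ i → k ≠ j → k ≠ v → A i k * B k j = 0 := by
    intro k hki hkj hkv
    by_cases hA0 : A i k = 0
    · rw [hA0, zero_mul]
    have hadj : G.Adj i k := (hAadj i k (Ne.symm hki)).mp hA0
    have hmem : k ∉ G.neighborSet i \ insert j (G.neighborSet j) := by
      rw [hdiff]; simpa using hkv
    have hk2 : k ∈ insert j (G.neighborSet j) := by
      by_contra h; exact hmem ⟨hadj, h⟩
    have hjk : G.Adj j k := by
      rcases hk2 with h | h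
      · exact absurd h hkj
      · exact h
    have hB0 : B k j = 0 := by
      by_contra hB0
      exact ((SimpleGraph.compl_adj _ _ _).mp ((hBadj k j hkj).mp hB0)).2 hjk.symm
    rw [hB0, mul_zero]
  have hsum : A i i * B i j + A i j * B j j + A i v * B v j = 0 := by
    have h0 : ∑ k, A i k * B k j = 0 := by
      have := congrFun (congrFun hAB i) j
      simpa [Matrix.mul_apply] using this
    rw [← h0, ← Finset.sum_subset (Finset.subset_univ ({i, j, v} : Finset (Fin n)))
      (fun k _ hk => by
        simp only [Finset.mem_insert, Finset.mem_singleton, not_or] at hk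
        exact key k hk.1 hk.2.1 hk.2.2)]
    rw [Finset.sum_insert (by simp [hij, Ne.symm hvnei]),
      Finset.sum_insert (by simp [Ne.symm hvnej]), Finset.sum_singleton, add_assoc]
  constructor
  · intro hadj
    have hBij : B i j = 0 := by
      by_contra hB0
      exact ((SimpleGraph.compl_adj _ _ _).mp ((hBadj i j hij).mp hB0)).2 hadj
    have hBjj : B j j ≠ 0 := by
      intro h
      rw [hBij, h, mul_zero, mul_zero, zero_add, zero_add] at hsum
      exact mul_ne_zero hAiv hBvj hsum
    refine ⟨hBjj, ?_⟩
    have := hdiag j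
    exact (mul_eq_zero.mp this).resolve_right hBjj
  · intro hnadj
    have hAij : A i j = 0 := by by_contra h; exact hnadj ((hAadj i j hij).mp h)
    have hAii : A i i ≠ 0 := by
      intro h
      rw [hAij, h, zero_mul, zero_mul, zero_add, zero_add] at hsum
      exact mul_ne_zero hAiv hBvj hsum
    refine ⟨hAii, ?_⟩
    have := hdiag i
    exact (mul_eq_zero.mp this).resolve_left hAii
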